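/- (Lemma: Lipschitz gradient bound in the victim block.) In a finite two-player Markov game with discount factor γ ∈ [0,1), initial distribution ρ, reward r : S × A_ν × A_α → [0,1], benign attacker policy π̂_α and ε_π ∈ [0,1], the function J_{ε_π}(ν, α) is differentiable at every point (ν, α) of the product of simplices Δ(A_ν)^{|S|} × Δ(A_α)^{|S|}, and its gradient with respect to the ν-block satisfies ‖∇_ν J_{ε_π}(ν, α)‖ ≤ √|A_ν| / (1-γ)², where ‖·‖ is the Euclidean norm on ℝ^{S × A_ν}. -/

import Mathlib

open scoped BigOperators RealInnerProductSpace
open Matrix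

/-- The state-transition matrix induced by a joint policy. -/
noncomputable def inducedMatrix {S Av Aa : Type*} [Fintype Av] [Fintype Aa]
    (P : S → Av → Aa → S → ℝ) (pinu : S → Av → ℝ) (pialpha : S → Aa → ℝ) :
    Matrix S S ℝ :=
  Matrix.of fun s' s => ∑ av, ∑ aa, pinu s av * pialpha s aa * P s av aa s'

/-- The marginalized reward `r̄_{π_ν,π_α}(s)`. -/
noncomputable def marginalReward {S Av Aa : Type*} [Fintype Av] [Fintype Aa]
    (r : S → Av → Aa → ℝ) (pinu : S → Av → ℝ) (pialpha : S → Aa → ℝ) (s : S) : ℝ :=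
  ∑ av, ∑ aa, pinu s av * pialpha s aa * r s av aa

/-- The objective `J_{ε_π}(ν, α) = V_ρ(π_ν, (1-ε_π)π̂_α + ε_π π_α)` under direct
parameterization, extended near the simplices by the rational formula
`J = ⟨(I - γ P_{π_ν, π_α^mix})⁻¹ ρ, r̄⟩` (the value scaled by `1/(1-γ)` is recovered
as `(1/(1-γ))⟨d, r̄⟩`; here `⟨(I-γP)⁻¹ρ, r̄⟩ = ∑_t γ^t ⟨P^t ρ, r̄⟩` is the value). -/
noncomputable def Jobj {S Av Aa : Type*} [Fintype S] [DecidableEq S]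
    [Fintype Av] [Fintype Aa]
    (P : S → Av → Aa → S → ℝ) (r : S → Av → Aa → ℝ) (γ ε : ℝ)
    (ρ : S → ℝ) (pihat : S → Aa → ℝ)
    (ν : EuclideanSpace ℝ (S × Av)) (α : EuclideanSpace ℝ (S × Aa)) : ℝ :=
  ∑ s, (((1 - γ • inducedMatrix P (fun s a => ν (s, a))
        (fun s a => (1 - ε) * pihat s a + ε * α (s, a)))⁻¹ *ᵥ ρ) s) *
      marginalReward r (fun s a => ν (s, a))
        (fun s a => (1 - ε) * pihat s a + ε * α (s, a)) s

/-- Membership in the product of probability simplices `Δ(A)^{|S|}`, under direct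
parameterization as a Euclidean vector. -/
def inPolicySimplex {S A : Type*} [Fintype A]
    (x : EuclideanSpace ℝ (S × A)) : Prop :=
  (∀ p : S × A, 0 ≤ x p) ∧ ∀ s : S, ∑ a, x (s, a) = 1

section Neumann
attribute [local instance] Matrix.linftyOpNormedRing Matrix.linftyOpNormedAlgebra

variable {S : Type*} [Fintype S] [DecidableEq S]

lemma neumann_aux (B : Matrix S S ℝ) (hB : ∀ i j, 0 ≤ B i j)
    (hcol : ∀ j, ∑ i, B i j = 1) {γ : ℝ} (hγ0 : 0 ≤ γ) (hγ1 : γ < 1) :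
    IsUnit (1 - γ • B) ∧ ∀ i j, 0 ≤ (Ring.inverse (1 - γ • B)) i j := by
  have hTnorm : ‖γ • B.transpose‖ < 1 := by
    have h1 : ‖B.transpose‖ ≤ 1 := by
      rw [Matrix.linfty_opNorm_def]
      have : ∀ i, ∑ j, ‖B.transpose i j‖₊ ≤ 1 := by
        intro i
        have : ((∑ j, ‖B.transpose i j‖₊ : NNReal) : ℝ) ≤ 1 := by
          push_cast
          simp only [Matrix.transpose_apply, coe_nnnorm, Real.norm_eq_abs]
          refine le_of_eq ?_
          calc ∑ j, |B j i| = ∑ j, B j i := by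
                exact Finset.sum_congr rfl fun j _ => abs_of_nonneg (hB j i)
            _ = 1 := hcol i
        exact_mod_cast this
      calc ((Finset.univ.sup fun i => ∑ j, ‖B.transpose i j‖₊ : NNReal) : ℝ)
          ≤ ((1 : NNReal) : ℝ) := by
            exact_mod_cast Finset.sup_le (fun i _ => this i)
        _ = 1 := by norm_num
    calc ‖γ • B.transpose‖ = ‖γ‖ * ‖B.transpose‖ := norm_smul _ _
      _ ≤ γ * 1 := by
          apply mul_le_mul _ h1 (norm_nonneg _) hγ0
          simp [abs_of_nonneg hγ0]
      _ < 1 := by linarith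
  have hTt : (1 - γ • B).transpose = 1 - γ • B.transpose := by
    simp [Matrix.transpose_sub, Matrix.transpose_smul]
  have hUnitT : IsUnit (1 - γ • B.transpose) := isUnit_one_sub_of_norm_lt_one hTnorm
  have hUnit : IsUnit (1 - γ • B) := by
    rw [Matrix.isUnit_iff_isUnit_det]
    rw [Matrix.isUnit_iff_isUnit_det] at hUnitT
    rwa [← hTt, Matrix.det_transpose] at hUnitT
  refine ⟨hUnit, fun i j => ?_⟩
  have hinvT : (Ring.inverse (1 - γ • B)) i j
      = (Ring.inverse (1 - γ • B.transpose)) j i := by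
    rw [← Matrix.nonsing_inv_eq_ringInverse, ← Matrix.nonsing_inv_eq_ringInverse,
      ← hTt, ← Matrix.transpose_nonsing_inv]
    rfl
  rw [hinvT, ← geom_series_eq_inverse _ hTnorm]
  set T := γ • B.transpose with hT
  have hTnn : ∀ n : ℕ, ∀ a b, 0 ≤ (T ^ n) a b := by
    intro n
    induction n with
    | zero => intro a b; by_cases h : a = b <;> simp [h, Matrix.one_apply]
    | succ n ih =>
      intro a b
      rw [pow_succ, Matrix.mul_apply]
      exact Finset.sum_nonneg fun k _ => mul_nonneg (ih a k)
        (smul_nonneg hγ0 (hB b k))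
  have hsum : Summable (fun n : ℕ => T ^ n) := summable_geometric_of_norm_lt_one hTnorm
  let entry : Matrix S S ℝ →L[ℝ] ℝ := LinearMap.toContinuousLinearMap
    { toFun := fun A => A j i
      map_add' := fun A C => rfl
      map_smul' := fun c A => rfl }
  have : (∑' n : ℕ, T ^ n) j i = ∑' n : ℕ, (T ^ n) j i := entry.map_tsum hsum
  exact le_of_le_of_eq (tsum_nonneg fun n => hTnn n j i) this.symm

variable {Av Aa : Type*} [Fintype Av] [Fintype Aa]

lemma induced_props {S : Type*} [Fintype S]
    (P : S → Av → Aa → S → ℝ) (hP0 : ∀ s av aa s', 0 ≤ P s av aa s')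
    (hP1 : ∀ s av aa, ∑ s', P s av aa s' = 1)
    (pinu : S → Av → ℝ) (hν0 : ∀ s a, 0 ≤ pinu s a) (hν1 : ∀ s, ∑ a, pinu s a = 1)
    (πm : S → Aa → ℝ) (hπ0 : ∀ s a, 0 ≤ πm s a) (hπ1 : ∀ s, ∑ a, πm s a = 1) :
    (∀ i j, 0 ≤ inducedMatrix P pinu πm i j) ∧
      (∀ t, ∑ s, inducedMatrix P pinu πm s t = 1) := by
  constructor
  · intro i j
    refine Finset.sum_nonneg fun av _ => Finset.sum_nonneg fun aa _ => ?_
    exact mul_nonneg (mul_nonneg (hν0 _ _) (hπ0 _ _)) (hP0 _ _ _ _)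
  · intro t
    simp only [inducedMatrix, Matrix.of_apply]
    rw [Finset.sum_comm]
    calc ∑ av, ∑ s, ∑ aa, pinu t av * πm t aa * P t av aa s
        = ∑ av, ∑ aa, ∑ s, pinu t av * πm t aa * P t av aa s := by
          exact Finset.sum_congr rfl fun av _ => Finset.sum_comm
      _ = ∑ av, ∑ aa, pinu t av * πm t aa := by
          refine Finset.sum_congr rfl fun av _ => Finset.sum_congr rfl fun aa _ => ?_
          rw [← Finset.mul_sum, hP1, mul_one]
      _ = ∑ av, pinu t av * ∑ aa, πm t aa := by
          exact Finset.sum_congr rfl fun av _ => (Finset.mul_sum _ _ _).symm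
      _ = 1 := by
          simp_rw [hπ1, mul_one]
          exact hν1 t

end Neumann

section AuxVGB
attribute [local instance] Matrix.linftyOpNormedRing Matrix.linftyOpNormedAlgebra

variable {S Av Aa : Type*} [Fintype S] [Nonempty S] [DecidableEq S]
  [Fintype Av] [Nonempty Av] [Fintype Aa] [Nonempty Aa]

set_option maxHeartbeats 2000000 in
lemma grad_bound
    (P : S → Av → Aa → S → ℝ)
    (hP0 : ∀ s av aa s', 0 ≤ P s av aa s')
    (hP1 : ∀ s av aa, ∑ s', P s av aa s' = 1)
    (r : S → Av → Aa → ℝ)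
    (hr0 : ∀ s av aa, 0 ≤ r s av aa) (hr1 : ∀ s av aa, r s av aa ≤ 1)
    (γ : ℝ) (hγ0 : 0 ≤ γ) (hγ1 : γ < 1)
    (ρ : S → ℝ) (hρ0 : ∀ s, 0 ≤ ρ s) (hρ1 : ∑ s, ρ s = 1)
    (πm : S → Aa → ℝ) (hπ0 : ∀ s a, 0 ≤ πm s a) (hπ1 : ∀ s, ∑ a, πm s a = 1)
    (ν : EuclideanSpace ℝ (S × Av)) (hν0 : ∀ p, 0 ≤ ν p)
    (hν1 : ∀ s, ∑ a, ν (s, a) = 1) :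
    ‖gradient (fun x : EuclideanSpace ℝ (S × Av) =>
        ∑ s, (((1 - γ • inducedMatrix P (fun s a => x (s, a)) πm)⁻¹ *ᵥ ρ) s) *
          marginalReward r (fun s a => x (s, a)) πm s) ν‖ ≤
      Real.sqrt (Fintype.card Av) / (1 - γ) ^ 2 := by
  classical
  -- linear maps
  set Bl : (EuclideanSpace ℝ (S × Av)) →ₗ[ℝ] Matrix S S ℝ :=
    { toFun := fun x => inducedMatrix P (fun s a => x (s, a)) πm
      map_add' := by
        intro x y
        ext s' t
        simp only [inducedMatrix, Matrix.of_apply, Matrix.add_apply, PiLp.add_apply,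
          add_mul]
        rw [← Finset.sum_add_distrib]
        exact Finset.sum_congr rfl fun av _ => Finset.sum_add_distrib
      map_smul' := by
        intro c x
        ext s' t
        simp only [inducedMatrix, Matrix.of_apply, Matrix.smul_apply, PiLp.smul_apply,
          smul_eq_mul, RingHom.id_apply, Finset.mul_sum, mul_assoc] } with hBl
  set B : (EuclideanSpace ℝ (S × Av)) →L[ℝ] Matrix S S ℝ :=
    LinearMap.toContinuousLinearMap Bl with hB
  set Rc : S → ((EuclideanSpace ℝ (S × Av)) →L[ℝ] ℝ) := fun s =>
    LinearMap.toContinuousLinearMap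
    { toFun := fun x => marginalReward r (fun s a => x (s, a)) πm s
      map_add' := by
        intro x y
        simp only [marginalReward, PiLp.add_apply, add_mul]
        rw [← Finset.sum_add_distrib]
        exact Finset.sum_congr rfl fun av _ => Finset.sum_add_distrib
      map_smul' := by
        intro c x
        simp only [marginalReward, PiLp.smul_apply, smul_eq_mul, RingHom.id_apply,
          Finset.mul_sum, mul_assoc] } with hRc
  set mv : S → (Matrix S S ℝ →L[ℝ] ℝ) := fun s =>
    LinearMap.toContinuousLinearMap
    { toFun := fun A => (A *ᵥ ρ) s
      map_add' := by intro A C; simp [Matrix.add_mulVec]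
      map_smul' := by intro c A; simp [Matrix.smul_mulVec] } with hmv
  -- the matrix at the point
  set Bν : Matrix S S ℝ := inducedMatrix P (fun s a => ν (s, a)) πm with hBνdef
  obtain ⟨hBnn, hBcol⟩ := induced_props P hP0 hP1 (fun s a => ν (s, a))
    (fun s a => hν0 (s, a)) hν1 πm hπ0 hπ1
  obtain ⟨hUnit, hDnn⟩ := neumann_aux Bν hBnn hBcol hγ0 hγ1
  set M : Matrix S S ℝ := 1 - γ • Bν with hMdef
  set D : Matrix S S ℝ := Ring.inverse M with hDdef
  set dd : S → ℝ := fun s => (D *ᵥ ρ) s with hdd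
  set rb : S → ℝ := fun s => marginalReward r (fun s a => ν (s, a)) πm s with hrb
  set V : S → ℝ := fun t => ∑ s, rb s * D s t with hV
  set Q : S → Av → ℝ := fun s a => (∑ aa, πm s aa * r s a aa)
    + γ * ∑ t, (∑ aa, πm s aa * P s a aa t) * V t with hQ
  have h1γ : (0:ℝ) < 1 - γ := by linarith
  -- column sums of M
  have hMD : M * D = 1 := Ring.mul_inverse_cancel _ hUnit
  have hMcol : ∀ t, ∑ s, M s t = 1 - γ := by
    intro t
    simp only [hMdef, Matrix.sub_apply, Matrix.smul_apply, Matrix.one_apply, smul_eq_mul]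
    rw [Finset.sum_sub_distrib]
    rw [Finset.sum_ite_eq' Finset.univ t (fun _ => (1:ℝ))]
    simp only [Finset.mem_univ, if_true, ← Finset.mul_sum, hBcol t]
    rw [hBcol t]
    ring
  have hDcol : ∀ t, ∑ s, D s t = 1 / (1 - γ) := by
    intro t
    have h2 : ∑ s, (M * D) s t = 1 := by
      rw [hMD]
      simp [Matrix.one_apply, Finset.sum_ite_eq' Finset.univ t (fun _ => (1:ℝ))]
    have h3 : ∑ s, (M * D) s t = (1 - γ) * ∑ k, D k t := by
      simp only [Matrix.mul_apply]
      rw [Finset.sum_comm]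
      rw [Finset.mul_sum]
      refine Finset.sum_congr rfl fun k _ => ?_
      rw [← Finset.sum_mul, hMcol k]
    rw [h3] at h2
    field_simp
    linarith
  have hdnn : ∀ s, 0 ≤ dd s := by
    intro s
    exact Finset.sum_nonneg fun t _ => mul_nonneg (hDnn s t) (hρ0 t)
  have hdsum : ∑ s, dd s = 1 / (1 - γ) := by
    simp only [hdd, Matrix.mulVec, dotProduct]
    rw [Finset.sum_comm]
    calc ∑ t, ∑ s, D s t * ρ t = ∑ t, (1 / (1 - γ)) * ρ t := by
          refine Finset.sum_congr rfl fun t _ => ?_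
          rw [← Finset.sum_mul, hDcol t]
      _ = 1 / (1 - γ) := by rw [← Finset.mul_sum, hρ1, mul_one]
  have hrb01 : ∀ s, 0 ≤ rb s ∧ rb s ≤ 1 := by
    intro s
    constructor
    · refine Finset.sum_nonneg fun av _ => Finset.sum_nonneg fun aa _ => ?_
      exact mul_nonneg (mul_nonneg (hν0 _) (hπ0 _ _)) (hr0 _ _ _)
    · calc rb s ≤ ∑ av, ∑ aa, ν (s, av) * πm s aa := by
            refine Finset.sum_le_sum fun av _ => Finset.sum_le_sum fun aa _ => ?_
            calc ν (s, av) * πm s aa * r s av aa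
                ≤ ν (s, av) * πm s aa * 1 := by
                  exact mul_le_mul_of_nonneg_left (hr1 _ _ _)
                    (mul_nonneg (hν0 _) (hπ0 _ _))
              _ = ν (s, av) * πm s aa := mul_one _
        _ = 1 := by
            calc ∑ av, ∑ aa, ν (s, av) * πm s aa
                = ∑ av, ν (s, av) * ∑ aa, πm s aa := by
                  exact Finset.sum_congr rfl fun av _ => (Finset.mul_sum _ _ _).symm
              _ = 1 := by simp_rw [hπ1, mul_one]; exact hν1 s
  have hV01 : ∀ t, 0 ≤ V t ∧ V t ≤ 1 / (1 - γ) := by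
    intro t
    constructor
    · exact Finset.sum_nonneg fun s _ => mul_nonneg (hrb01 s).1 (hDnn s t)
    · calc V t ≤ ∑ s, D s t := by
            refine Finset.sum_le_sum fun s _ => ?_
            calc rb s * D s t ≤ 1 * D s t :=
                  mul_le_mul_of_nonneg_right (hrb01 s).2 (hDnn s t)
              _ = D s t := one_mul _
        _ = 1 / (1 - γ) := hDcol t
  have hQ01 : ∀ s a, 0 ≤ Q s a ∧ Q s a ≤ 1 / (1 - γ) := by
    intro s a
    have hq0 : 0 ≤ ∑ aa, πm s aa * r s a aa :=
      Finset.sum_nonneg fun aa _ => mul_nonneg (hπ0 _ _) (hr0 _ _ _)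
    have hq1 : ∑ aa, πm s aa * r s a aa ≤ 1 := by
      calc ∑ aa, πm s aa * r s a aa ≤ ∑ aa, πm s aa := by
            refine Finset.sum_le_sum fun aa _ => ?_
            calc πm s aa * r s a aa ≤ πm s aa * 1 :=
                  mul_le_mul_of_nonneg_left (hr1 _ _ _) (hπ0 _ _)
              _ = πm s aa := mul_one _
        _ = 1 := hπ1 s
    have hc0 : ∀ t, 0 ≤ ∑ aa, πm s aa * P s a aa t := fun t =>
      Finset.sum_nonneg fun aa _ => mul_nonneg (hπ0 _ _) (hP0 _ _ _ _)
    have hcsum : ∑ t, (∑ aa, πm s aa * P s a aa t) = 1 := by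
      rw [Finset.sum_comm]
      calc ∑ aa, ∑ t, πm s aa * P s a aa t = ∑ aa, πm s aa := by
            refine Finset.sum_congr rfl fun aa _ => ?_
            rw [← Finset.mul_sum, hP1, mul_one]
        _ = 1 := hπ1 s
    have hsec0 : 0 ≤ ∑ t, (∑ aa, πm s aa * P s a aa t) * V t :=
      Finset.sum_nonneg fun t _ => mul_nonneg (hc0 t) (hV01 t).1
    have hsec1 : ∑ t, (∑ aa, πm s aa * P s a aa t) * V t ≤ 1 / (1 - γ) := by
      calc ∑ t, (∑ aa, πm s aa * P s a aa t) * V t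
          ≤ ∑ t, (∑ aa, πm s aa * P s a aa t) * (1 / (1 - γ)) := by
            refine Finset.sum_le_sum fun t _ => ?_
            exact mul_le_mul_of_nonneg_left (hV01 t).2 (hc0 t)
        _ = 1 / (1 - γ) := by rw [← Finset.sum_mul, hcsum, one_mul]
    constructor
    · exact add_nonneg hq0 (mul_nonneg hγ0 hsec0)
    · calc Q s a ≤ 1 + γ * (1 / (1 - γ)) := by
            refine add_le_add hq1 (mul_le_mul_of_nonneg_left hsec1 hγ0)
        _ = 1 / (1 - γ) := by field_simp; ring
  -- the function rewritten via Ring.inverse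
  have hJeq : (fun x : EuclideanSpace ℝ (S × Av) =>
      ∑ s, (((1 - γ • inducedMatrix P (fun s a => x (s, a)) πm)⁻¹ *ᵥ ρ) s) *
        marginalReward r (fun s a => x (s, a)) πm s)
      = (fun x : EuclideanSpace ℝ (S × Av) =>
        ∑ s, mv s (Ring.inverse ((1 : Matrix S S ℝ) - γ • B x)) * Rc s x) := by
    funext x
    refine Finset.sum_congr rfl fun s _ => ?_
    rw [Matrix.nonsing_inv_eq_ringInverse]
    rfl
  -- derivative of the affine matrix map
  have hMd : HasFDerivAt (fun x : EuclideanSpace ℝ (S × Av) =>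
      (1 : Matrix S S ℝ) - γ • B x) (-(γ • B)) ν :=
    (B.hasFDerivAt.const_smul γ).const_sub 1
  -- derivative of Ring.inverse at M
  have hval : (↑hUnit.unit : Matrix S S ℝ) = M := hUnit.unit_spec
  have hinv : (↑hUnit.unit⁻¹ : Matrix S S ℝ) = D := by
    rw [← Ring.inverse_unit, hval]
  have hInv : HasFDerivAt (Ring.inverse : Matrix S S ℝ → Matrix S S ℝ)
      (-(ContinuousLinearMap.mulLeftRight ℝ (Matrix S S ℝ) D D)) M := by
    have h := hasFDerivAt_ringInverse (𝕜 := ℝ) hUnit.unit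
    rw [hinv, hval] at h
    exact h
  have hMν : ((1 : Matrix S S ℝ) - γ • B ν) = M := rfl
  have hInvComp : HasFDerivAt
      (fun x : EuclideanSpace ℝ (S × Av) => Ring.inverse ((1 : Matrix S S ℝ) - γ • B x))
      ((-(ContinuousLinearMap.mulLeftRight ℝ (Matrix S S ℝ) D D)).comp (-(γ • B))) ν :=
by
    have h' := HasFDerivAt.comp (g := (Ring.inverse : Matrix S S ℝ → Matrix S S ℝ))
      ν (hMν ▸ hInv) hMd
    exact h'
  set L : EuclideanSpace ℝ (S × Av) →L[ℝ] ℝ :=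
    ∑ s, ((mv s (Ring.inverse ((1 : Matrix S S ℝ) - γ • B ν))) • Rc s
      + (Rc s ν) • ((mv s).comp
        ((-(ContinuousLinearMap.mulLeftRight ℝ (Matrix S S ℝ) D D)).comp (-(γ • B)))))
    with hL
  have hJ : HasFDerivAt (fun x : EuclideanSpace ℝ (S × Av) =>
      ∑ s, (((1 - γ • inducedMatrix P (fun s a => x (s, a)) πm)⁻¹ *ᵥ ρ) s) *
        marginalReward r (fun s a => x (s, a)) πm s) L ν := by
    rw [hJeq, hL]
    exact HasFDerivAt.fun_sum fun s _ =>
      (((mv s).hasFDerivAt.comp ν hInvComp).mul (Rc s).hasFDerivAt)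
  set Jf := (fun x : EuclideanSpace ℝ (S × Av) =>
      ∑ s, (((1 - γ • inducedMatrix P (fun s a => x (s, a)) πm)⁻¹ *ᵥ ρ) s) *
        marginalReward r (fun s a => x (s, a)) πm s) with hJf
  have hgradeq : gradient Jf ν = (InnerProductSpace.toDual ℝ _).symm L := by
    rw [gradient, hJ.fderiv]
  have hkey : ∀ (s0 : S) (a0 : Av),
      L (EuclideanSpace.single (s0, a0) (1:ℝ)) = dd s0 * Q s0 a0 := by
    intro s0 a0
    set e : EuclideanSpace ℝ (S × Av) := EuclideanSpace.single (s0, a0) (1:ℝ) with he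
    set c0 : S → ℝ := fun s' => ∑ aa, πm s0 aa * P s0 a0 aa s' with hc0
    set q0 : ℝ := ∑ aa, πm s0 aa * r s0 a0 aa with hq0
    -- value of B at the single vector
    have hBe : B e = Matrix.of (fun s' t => if t = s0 then c0 s' else 0) := by
      ext s' t
      show inducedMatrix P (fun s a => e (s, a)) πm s' t = _
      simp only [inducedMatrix, Matrix.of_apply]
      by_cases h : t = s0
      · subst h
        rw [if_pos rfl, Finset.sum_eq_single a0]
        · refine Finset.sum_congr rfl fun aa _ => ?_
          simp [he, EuclideanSpace.single_apply]
        · intro av _ hav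
          refine Finset.sum_eq_zero fun aa _ => ?_
          simp [he, EuclideanSpace.single_apply, Prod.ext_iff, hav]
        · intro hmem; exact absurd (Finset.mem_univ a0) hmem
      · rw [if_neg h]
        refine Finset.sum_eq_zero fun av _ => Finset.sum_eq_zero fun aa _ => ?_
        simp [he, EuclideanSpace.single_apply, Prod.ext_iff, h]
    have hRce : ∀ s, Rc s e = (if s = s0 then q0 else 0) := by
      intro s
      show marginalReward r (fun s a => e (s, a)) πm s = _
      simp only [marginalReward]
      by_cases h : s = s0
      · subst h
        rw [if_pos rfl, Finset.sum_eq_single a0]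
        · refine Finset.sum_congr rfl fun aa _ => ?_
          simp [he, EuclideanSpace.single_apply]
        · intro av _ hav
          refine Finset.sum_eq_zero fun aa _ => ?_
          simp [he, EuclideanSpace.single_apply, Prod.ext_iff, hav]
        · intro hmem; exact absurd (Finset.mem_univ a0) hmem
      · rw [if_neg h]
        refine Finset.sum_eq_zero fun av _ => Finset.sum_eq_zero fun aa _ => ?_
        simp [he, EuclideanSpace.single_apply, Prod.ext_iff, h]
    -- expand L e
    have hLe : L e = ∑ s, ((mv s (Ring.inverse ((1 : Matrix S S ℝ) - γ • B ν))) * Rc s e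
        + Rc s ν * mv s ((-(ContinuousLinearMap.mulLeftRight ℝ (Matrix S S ℝ) D D))
            ((-(γ • B)) e))) := by
      rw [hL]
      simp only [ContinuousLinearMap.sum_apply, ContinuousLinearMap.add_apply,
        ContinuousLinearMap.smul_apply, ContinuousLinearMap.comp_apply, smul_eq_mul]
      rfl
    have hinner : (-(ContinuousLinearMap.mulLeftRight ℝ (Matrix S S ℝ) D D)) ((-(γ • B)) e)
        = γ • (D * B e * D) := by
      simp only [ContinuousLinearMap.neg_apply, ContinuousLinearMap.smul_apply,
        ContinuousLinearMap.mulLeftRight_apply, mul_neg, neg_mul, neg_neg,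
        Matrix.mul_smul, Matrix.smul_mul]
    have hmvsmul : ∀ s (X : Matrix S S ℝ), mv s (γ • X) = γ * (X *ᵥ ρ) s := by
      intro s X
      show ((γ • X) *ᵥ ρ) s = γ * (X *ᵥ ρ) s
      rw [Matrix.smul_mulVec]
      rfl
    have hmvD : ∀ s, mv s (Ring.inverse ((1 : Matrix S S ℝ) - γ • B ν)) = dd s := fun s => rfl
    have hRcν : ∀ s, Rc s ν = rb s := fun s => rfl
    -- the mulVec computation
    have hE0 : (Matrix.of (fun s' t => if t = s0 then c0 s' else 0)) *ᵥ dd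
        = fun s' => c0 s' * dd s0 := by
      funext s'
      simp only [Matrix.mulVec, dotProduct, Matrix.of_apply, ite_mul, zero_mul]
      exact (Finset.sum_ite_eq' Finset.univ s0 (fun t => c0 s' * dd t)).trans
        (if_pos (Finset.mem_univ _))
    have hDX : ∀ s, ((D * Matrix.of (fun s' t => if t = s0 then c0 s' else 0) * D) *ᵥ ρ) s
        = ∑ t, D s t * (c0 t * dd s0) := by
      intro s
      rw [← Matrix.mulVec_mulVec, ← Matrix.mulVec_mulVec]
      have : (D *ᵥ ρ) = dd := rfl
      rw [this, hE0]
      simp only [Matrix.mulVec, dotProduct]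
    rw [hLe]
    have hfinal : ∀ s, (mv s (Ring.inverse ((1 : Matrix S S ℝ) - γ • B ν))) * Rc s e
        + Rc s ν * mv s ((-(ContinuousLinearMap.mulLeftRight ℝ (Matrix S S ℝ) D D))
            ((-(γ • B)) e))
        = dd s * (if s = s0 then q0 else 0) + rb s * (γ * ∑ t, D s t * (c0 t * dd s0)) := by
      intro s
      rw [hmvD, hRcν, hRce, hinner, hBe, hmvsmul, hDX]
    rw [Finset.sum_congr rfl fun s _ => hfinal s]
    rw [Finset.sum_add_distrib]
    have hfirst : ∑ s, dd s * (if s = s0 then q0 else 0) = dd s0 * q0 := by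
      simp only [mul_ite, mul_zero]
      exact (Finset.sum_ite_eq' Finset.univ s0 (fun s => dd s * q0)).trans
        (if_pos (Finset.mem_univ _))
    have hsecond : ∑ s, rb s * (γ * ∑ t, D s t * (c0 t * dd s0))
        = γ * dd s0 * ∑ t, c0 t * V t := by
      calc ∑ s, rb s * (γ * ∑ t, D s t * (c0 t * dd s0))
          = ∑ s, ∑ t, γ * dd s0 * (c0 t * (rb s * D s t)) := by
            refine Finset.sum_congr rfl fun s _ => ?_
            rw [Finset.mul_sum, Finset.mul_sum]
            exact Finset.sum_congr rfl fun t _ => by ring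
        _ = ∑ t, ∑ s, γ * dd s0 * (c0 t * (rb s * D s t)) := Finset.sum_comm
        _ = γ * dd s0 * ∑ t, c0 t * V t := by
            rw [Finset.mul_sum]
            refine Finset.sum_congr rfl fun t _ => ?_
            rw [← Finset.mul_sum, ← Finset.mul_sum]
    rw [hfirst, hsecond, hQ]
    ring
  -- gradient coordinates
  have hgradcoord : ∀ p : S × Av,
      gradient Jf ν p = dd p.1 * Q p.1 p.2 := by
    intro p
    have h1 : gradient Jf ν p
        = ⟪gradient Jf ν, EuclideanSpace.single p (1:ℝ)⟫ := by
      rw [EuclideanSpace.inner_single_right]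
      simp
    rw [h1, hgradeq, InnerProductSpace.toDual_symm_apply]
    exact hkey p.1 p.2
  -- norm bound
  have hnorm : ‖gradient Jf ν‖
      = Real.sqrt (∑ p : S × Av, (dd p.1 * Q p.1 p.2) ^ 2) := by
    rw [EuclideanSpace.norm_eq]
    congr 1
    refine Finset.sum_congr rfl fun p _ => ?_
    rw [hgradcoord p, Real.norm_eq_abs, sq_abs]
  rw [hnorm]
  have hsum_le : ∑ p : S × Av, (dd p.1 * Q p.1 p.2) ^ 2
      ≤ (Fintype.card Av : ℝ) * (1 / (1 - γ)) ^ 4 := by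
    calc ∑ p : S × Av, (dd p.1 * Q p.1 p.2) ^ 2
        = ∑ s, ∑ a, (dd s * Q s a) ^ 2 := by rw [Fintype.sum_prod_type]
      _ ≤ ∑ s, ∑ a : Av, dd s ^ 2 * (1 / (1 - γ)) ^ 2 := by
          refine Finset.sum_le_sum fun s _ => Finset.sum_le_sum fun a _ => ?_
          rw [mul_pow]
          exact mul_le_mul_of_nonneg_left
            (pow_le_pow_left₀ (hQ01 s a).1 (hQ01 s a).2 2) (sq_nonneg _)
      _ = (Fintype.card Av : ℝ) * (1 / (1 - γ)) ^ 2 * ∑ s, dd s ^ 2 := by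
          simp only [Finset.sum_const, Finset.card_univ, nsmul_eq_mul]
          rw [Finset.mul_sum]
          refine Finset.sum_congr rfl fun s _ => by ring
      _ ≤ (Fintype.card Av : ℝ) * (1 / (1 - γ)) ^ 2 * (∑ s, dd s) ^ 2 := by
          refine mul_le_mul_of_nonneg_left ?_ ?_
          · exact Finset.sum_sq_le_sq_sum_of_nonneg fun s _ => hdnn s
          · positivity
      _ = (Fintype.card Av : ℝ) * (1 / (1 - γ)) ^ 4 := by
          rw [hdsum]
          ring
  calc Real.sqrt (∑ p : S × Av, (dd p.1 * Q p.1 p.2) ^ 2)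
      ≤ Real.sqrt ((Fintype.card Av : ℝ) * (1 / (1 - γ)) ^ 4) := Real.sqrt_le_sqrt hsum_le
    _ = Real.sqrt (Fintype.card Av) / (1 - γ) ^ 2 := by
        rw [Real.sqrt_mul (by positivity)]
        have h4 : ((1:ℝ) / (1 - γ)) ^ 4 = (1 / (1 - γ) ^ 2) ^ 2 := by
          field_simp
        rw [h4, Real.sqrt_sq (by positivity), mul_one_div]



set_option maxHeartbeats 1000000 in
lemma joint_diff
    (P : S → Av → Aa → S → ℝ)
    (hP0 : ∀ s av aa s', 0 ≤ P s av aa s')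
    (hP1 : ∀ s av aa, ∑ s', P s av aa s' = 1)
    (r : S → Av → Aa → ℝ)
    (γ : ℝ) (hγ0 : 0 ≤ γ) (hγ1 : γ < 1)
    (ρ : S → ℝ)
    (pihat : S → Aa → ℝ)
    (hpihat0 : ∀ s a, 0 ≤ pihat s a) (hpihat1 : ∀ s, ∑ a, pihat s a = 1)
    (ε : ℝ) (hε0 : 0 ≤ ε) (hε1 : ε ≤ 1)
    (ν : EuclideanSpace ℝ (S × Av)) (α : EuclideanSpace ℝ (S × Aa))
    (hν0 : ∀ p, 0 ≤ ν p) (hν1 : ∀ s, ∑ a, ν (s, a) = 1)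
    (hα0 : ∀ p, 0 ≤ α p) (hα1 : ∀ s, ∑ a, α (s, a) = 1) :
    DifferentiableAt ℝ
        (fun pr : EuclideanSpace ℝ (S × Av) × EuclideanSpace ℝ (S × Aa) =>
          Jobj P r γ ε ρ pihat pr.1 pr.2) (ν, α) := by
  classical
  -- the mixed policy at the point
  have hπ0 : ∀ s a, 0 ≤ (1 - ε) * pihat s a + ε * α (s, a) := fun s a =>
    add_nonneg (mul_nonneg (by linarith) (hpihat0 s a)) (mul_nonneg hε0 (hα0 (s, a)))
  have hπ1 : ∀ s, ∑ a, ((1 - ε) * pihat s a + ε * α (s, a)) = 1 := by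
    intro s
    rw [Finset.sum_add_distrib, ← Finset.mul_sum, ← Finset.mul_sum, hpihat1, hα1]
    ring
  obtain ⟨hBnn, hBcol⟩ := induced_props P hP0 hP1 (fun s a => ν (s, a))
    (fun s a => hν0 (s, a)) hν1 (fun s a => (1 - ε) * pihat s a + ε * α (s, a)) hπ0 hπ1
  obtain ⟨hUnit, -⟩ := neumann_aux _ hBnn hBcol hγ0 hγ1
  -- the matrix-valued map
  set Mfull : EuclideanSpace ℝ (S × Av) × EuclideanSpace ℝ (S × Aa) → Matrix S S ℝ :=
    fun pr => 1 - γ • inducedMatrix P (fun s a => pr.1 (s, a))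
      (fun s a => (1 - ε) * pihat s a + ε * pr.2 (s, a)) with hMfull
  set mv : S → (Matrix S S ℝ →L[ℝ] ℝ) := fun s =>
    LinearMap.toContinuousLinearMap
    { toFun := fun A => (A *ᵥ ρ) s
      map_add' := by intro A C; simp [Matrix.add_mulVec]
      map_smul' := by intro c A; simp [Matrix.smul_mulVec] } with hmv
  have hfun : (fun pr : EuclideanSpace ℝ (S × Av) × EuclideanSpace ℝ (S × Aa) =>
      Jobj P r γ ε ρ pihat pr.1 pr.2)
      = fun pr => ∑ s, mv s (Ring.inverse (Mfull pr)) *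
          marginalReward r (fun s a => pr.1 (s, a))
            (fun s a => (1 - ε) * pihat s a + ε * pr.2 (s, a)) s := by
    funext pr
    unfold Jobj
    refine Finset.sum_congr rfl fun s _ => ?_
    rw [Matrix.nonsing_inv_eq_ringInverse]
    rfl
  rw [hfun]
  -- coordinate evaluations are differentiable
  have hx1 : ∀ p : S × Av, DifferentiableAt ℝ
      (fun pr : EuclideanSpace ℝ (S × Av) × EuclideanSpace ℝ (S × Aa) => pr.1 p)
      (ν, α) := by
    intro p
    exact (((EuclideanSpace.proj p : EuclideanSpace ℝ (S × Av) →L[ℝ] ℝ).comp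
      (ContinuousLinearMap.fst ℝ (EuclideanSpace ℝ (S × Av))
        (EuclideanSpace ℝ (S × Aa)))).differentiableAt)
  have hx2 : ∀ p : S × Aa, DifferentiableAt ℝ
      (fun pr : EuclideanSpace ℝ (S × Av) × EuclideanSpace ℝ (S × Aa) => pr.2 p)
      (ν, α) := by
    intro p
    exact (((EuclideanSpace.proj p : EuclideanSpace ℝ (S × Aa) →L[ℝ] ℝ).comp
      (ContinuousLinearMap.snd ℝ (EuclideanSpace ℝ (S × Av))
        (EuclideanSpace ℝ (S × Aa)))).differentiableAt)
  -- differentiability of the matrix-valued map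
  have hMrepr : Mfull = fun pr =>
      (1 : Matrix S S ℝ) - γ • ∑ t : S × Av × Aa,
        (pr.1 (t.1, t.2.1) * ((1 - ε) * pihat t.1 t.2.2 + ε * pr.2 (t.1, t.2.2))) •
          (Matrix.of fun s' u => if u = t.1 then P t.1 t.2.1 t.2.2 s' else 0) := by
    have hind : ∀ (x : EuclideanSpace ℝ (S × Av)) (y : EuclideanSpace ℝ (S × Aa)),
        inducedMatrix P (fun s a => x (s, a))
          (fun s a => (1 - ε) * pihat s a + ε * y (s, a))
        = ∑ t : S × Av × Aa,
            (x (t.1, t.2.1) * ((1 - ε) * pihat t.1 t.2.2 + ε * y (t.1, t.2.2))) •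
              (Matrix.of fun s' u => if u = t.1 then P t.1 t.2.1 t.2.2 s' else 0) := by
      intro x y
      ext s' u
      simp only [inducedMatrix, Matrix.of_apply, Matrix.sum_apply, Matrix.smul_apply,
        smul_eq_mul, mul_ite, mul_zero]
      rw [Fintype.sum_prod_type]
      have pull : ∀ t1 : S,
          (∑ q : Av × Aa, if u = t1 then
            x (t1, q.1) * ((1 - ε) * pihat t1 q.2 + ε * y (t1, q.2)) * P t1 q.1 q.2 s'
            else 0)
          = if u = t1 then
              ∑ q : Av × Aa,
                x (t1, q.1) * ((1 - ε) * pihat t1 q.2 + ε * y (t1, q.2)) * P t1 q.1 q.2 s'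
            else 0 := by
        intro t1
        split_ifs <;> simp
      simp only [pull]
      rw [Finset.sum_ite_eq Finset.univ u, if_pos (Finset.mem_univ u),
        Fintype.sum_prod_type]
    funext pr
    simp only [hMfull]
    rw [hind pr.1 pr.2]
  have hMdiff : DifferentiableAt ℝ Mfull (ν, α) := by
    rw [hMrepr]
    refine DifferentiableAt.const_sub ?_ 1
    refine DifferentiableAt.const_smul ?_ γ
    refine DifferentiableAt.fun_sum fun t _ => ?_
    refine DifferentiableAt.smul_const ?_ _
    exact (hx1 (t.1, t.2.1)).mul
      (((hx2 (t.1, t.2.2)).const_mul ε).const_add ((1 - ε) * pihat t.1 t.2.2))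
  have hUnit' : IsUnit (Mfull (ν, α)) := hUnit
  have h1 : DifferentiableAt ℝ (fun pr => Ring.inverse (Mfull pr)) (ν, α) := by
    have h' := DifferentiableAt.comp (g := (Ring.inverse : Matrix S S ℝ → Matrix S S ℝ))
      (ν, α) (differentiableAt_inverse hUnit') hMdiff
    exact h'
  refine DifferentiableAt.fun_sum fun s _ => ?_
  refine DifferentiableAt.mul ?_ ?_
  · have h2 := DifferentiableAt.comp (g := fun A : Matrix S S ℝ => mv s A)
      (ν, α) (mv s).differentiableAt h1
    exact h2
  · show DifferentiableAt ℝ (fun pr : EuclideanSpace ℝ (S × Av) × EuclideanSpace ℝ (S × Aa)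
        => ∑ av, ∑ aa, pr.1 (s, av) * ((1 - ε) * pihat s aa + ε * pr.2 (s, aa)) * r s av aa)
      (ν, α)
    refine DifferentiableAt.fun_sum fun av _ => DifferentiableAt.fun_sum fun aa _ => ?_
    exact ((hx1 (s, av)).mul
      (((hx2 (s, aa)).const_mul ε).const_add ((1 - ε) * pihat s aa))).mul_const _

end AuxVGB

/-- Lipschitz gradient bound in the victim block:
`J_{ε_π}` is differentiable at every point of the product of simplices and
`‖∇_ν J_{ε_π}(ν, α)‖ ≤ √|A_ν| / (1-γ)²`. -/
theorem victim_gradient_bound {S Av Aa : Type*}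
    [Fintype S] [Nonempty S] [DecidableEq S]
    [Fintype Av] [Nonempty Av] [Fintype Aa] [Nonempty Aa]
    (P : S → Av → Aa → S → ℝ)
    (hP0 : ∀ s av aa s', 0 ≤ P s av aa s')
    (hP1 : ∀ s av aa, ∑ s', P s av aa s' = 1)
    (r : S → Av → Aa → ℝ)
    (hr0 : ∀ s av aa, 0 ≤ r s av aa) (hr1 : ∀ s av aa, r s av aa ≤ 1)
    (γ : ℝ) (hγ0 : 0 ≤ γ) (hγ1 : γ < 1)
    (ρ : S → ℝ) (hρ0 : ∀ s, 0 ≤ ρ s) (hρ1 : ∑ s, ρ s = 1)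
    (pihat : S → Aa → ℝ)
    (hpihat0 : ∀ s a, 0 ≤ pihat s a) (hpihat1 : ∀ s, ∑ a, pihat s a = 1)
    (ε : ℝ) (hε0 : 0 ≤ ε) (hε1 : ε ≤ 1)
    (ν : EuclideanSpace ℝ (S × Av)) (α : EuclideanSpace ℝ (S × Aa))
    (hν : inPolicySimplex ν) (hα : inPolicySimplex α) :
    DifferentiableAt ℝ
        (fun pr : EuclideanSpace ℝ (S × Av) × EuclideanSpace ℝ (S × Aa) =>
          Jobj P r γ ε ρ pihat pr.1 pr.2) (ν, α) ∧
      ‖gradient (fun ν' => Jobj P r γ ε ρ pihat ν' α) ν‖ ≤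
        Real.sqrt (Fintype.card Av) / (1 - γ) ^ 2 := by
  constructor
  · exact joint_diff P hP0 hP1 r γ hγ0 hγ1 ρ pihat hpihat0 hpihat1 ε hε0 hε1 ν α
      hν.1 hν.2 hα.1 hα.2
  · have hπ0 : ∀ s a, 0 ≤ (1 - ε) * pihat s a + ε * α (s, a) := fun s a =>
      add_nonneg (mul_nonneg (by linarith) (hpihat0 s a)) (mul_nonneg hε0 (hα.1 (s, a)))
    have hπ1 : ∀ s, ∑ a, ((1 - ε) * pihat s a + ε * α (s, a)) = 1 := by
      intro s
      rw [Finset.sum_add_distrib, ← Finset.mul_sum, ← Finset.mul_sum, hpihat1, hα.2]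
      ring
    have h := grad_bound P hP0 hP1 r hr0 hr1 γ hγ0 hγ1 ρ hρ0 hρ1
      (fun s a => (1 - ε) * pihat s a + ε * α (s, a)) hπ0 hπ1 ν hν.1 hν.2
    have hfeq : (fun ν' => Jobj P r γ ε ρ pihat ν' α)
        = (fun x : EuclideanSpace ℝ (S × Av) =>
          ∑ s, (((1 - γ • inducedMatrix P (fun s a => x (s, a))
                (fun s a => (1 - ε) * pihat s a + ε * α (s, a)))⁻¹ *ᵥ ρ) s) *
              marginalReward r (fun s a => x (s, a))
                (fun s a => (1 - ε) * pihat s a + ε * α (s, a)) s) := rfl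
    rw [hfeq]
    exact h
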